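/- Let (V,c,p) be an instance of Asymmetric A Priori TSP with a depot d ∈ V (i.e., p(d) = 1), let n := |V| ≥ 1, and set V₁ := {v ∈ V : p(v) ≥ 1/√n} and V₂ := {v ∈ V : p(v) < 1/√n} ∪ {d}, so that V₁ ∪ V₂ = V and V₁ ∩ V₂ = {d}. Let α ≥ 1, let T₁ be a tour on V₁ with c(T₁) ≤ α · TSP(V₁,c), and let T₂ be any tour on V₂. Let T be the tour on V whose cyclic order visits d, then the vertices of V₁∖{d} in the order in which they follow d in T₁, then the vertices of V₂∖{d} in the order in which they follow d in T₂, and returns to d. Then E_{A∼p}[c(T[A])] ≤ (2α + 12) · √n · E_{A∼p}[TSP(A,c)]. -/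

import Mathlib

noncomputable section

/-- The cost of a tour given as a cyclic list: the sum of `c` over consecutive pairs
(cyclically). -/
def cycCost {V : Type*} (c : V → V → ℝ) (l : List V) : ℝ :=
  (List.zipWith c l (l.rotate 1)).sum

/-- `l` is a tour on the finite set `A`: a cyclic ordering of `A`, visiting each element
exactly once. -/
def IsTour {V : Type*} [DecidableEq V] (A : Finset V) (l : List V) : Prop :=
  l.Nodup ∧ l.toFinset = A

/-- Short-cutting a tour to the set `A` of active vertices. -/
def shortcut {V : Type*} [DecidableEq V] (l : List V) (A : Finset V) : List V :=
  l.filter (fun v => v ∈ A)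

/-- The expectation of `f` over the random set of active vertices, where each vertex `v`
is active independently with probability `p v`. -/
def apExpect {V : Type*} [Fintype V] [DecidableEq V] (p : V → ℝ) (f : Finset V → ℝ) : ℝ :=
  ∑ A : Finset V, (∏ v ∈ A, p v) * (∏ v ∈ Aᶜ, (1 - p v)) * f A

/-- The minimum cost of a tour on `A` with respect to `c`. -/
def TSP {V : Type*} [DecidableEq V] (c : V → V → ℝ) (A : Finset V) : ℝ :=
  sInf {x : ℝ | ∃ l : List V, IsTour A l ∧ x = cycCost c l}

section Lists
variable {V : Type*} (c : V → V → ℝ)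

/-- cost of the path a :: l ++ [b] -/
def pcost (a : V) (l : List V) (b : V) : ℝ :=
  (List.zipWith c (a :: l) (l ++ [b])).sum

@[simp] lemma pcost_nil (a b : V) : pcost c a [] b = c a b := by
  simp [pcost]

@[simp] lemma pcost_cons (a x b : V) (l : List V) :
    pcost c a (x :: l) b = c a x + pcost c x l b := by
  simp [pcost]

variable {c}

lemma pcost_nonneg (hc0 : ∀ x y, 0 ≤ c x y) (a b : V) (l : List V) :
    0 ≤ pcost c a l b := by
  induction l generalizing a with
  | nil => simpa using hc0 a b
  | cons x l ih => simpa using add_nonneg (hc0 a x) (ih x)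

lemma pcost_tri (htri : ∀ x y z, c x z ≤ c x y + c y z) (a x b : V) (l : List V) :
    pcost c a l b ≤ c a x + pcost c x l b := by
  cases l with
  | nil => simpa using htri a x b
  | cons y m => simpa [add_assoc] using add_le_add_left (htri a x y) (pcost c y m b)

lemma pcost_last_tri (htri : ∀ x y z, c x z ≤ c x y + c y z) (a x b : V) (l : List V) :
    pcost c a l b ≤ pcost c a l x + c x b := by
  induction l generalizing a with
  | nil => simpa using htri a x b
  | cons y m ih => simpa [add_assoc] using add_le_add_right (ih y) (c a y)

lemma pcost_filter (htri : ∀ x y z, c x z ≤ c x y + c y z) (a b : V) (l : List V)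
    (P : V → Bool) : pcost c a (l.filter P) b ≤ pcost c a l b := by
  induction l generalizing a with
  | nil => simp
  | cons x m ih =>
    by_cases hx : P x
    · rw [List.filter_cons_of_pos hx, pcost_cons, pcost_cons]
      exact add_le_add_right (ih x) _
    · rw [List.filter_cons_of_neg (by simpa using hx), pcost_cons]
      exact (ih a).trans (pcost_tri htri a x b m)

lemma pcost_snoc (a z b : V) (l : List V) :
    pcost c a (l ++ [z]) b = pcost c a l z + c z b := by
  induction l generalizing a with
  | nil => simp
  | cons x m ih => simp [ih x, add_assoc]

lemma pcost_append (hcrefl : ∀ v, c v v = 0)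
    (htri : ∀ x y z, c x z ≤ c x y + c y z) (d : V) (l₁ l₂ : List V) :
    pcost c d (l₁ ++ l₂) d ≤ pcost c d l₁ d + pcost c d l₂ d := by
  have aux : ∀ a : V, pcost c a (l₁ ++ l₂) d ≤ pcost c a l₁ d + pcost c d l₂ d := by
    intro a
    induction l₁ generalizing a with
    | nil => simpa using pcost_tri htri a d d l₂
    | cons x m ih => simpa [add_assoc] using add_le_add_right (ih x) (c a x)
  exact aux d

lemma pcost_star (hcrefl : ∀ v, c v v = 0)
    (htri : ∀ x y z, c x z ≤ c x y + c y z) (d : V) (l : List V) :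
    pcost c d l d ≤ (l.map (fun v => c d v + c v d)).sum := by
  have aux : ∀ x (l : List V), pcost c x l d ≤ c x d + (l.map (fun v => c d v + c v d)).sum := by
    intro x l
    induction l generalizing x with
    | nil => simp
    | cons y m ih =>
      rw [pcost_cons, List.map_cons, List.sum_cons]
      calc c x y + pcost c y m d ≤ (c x d + c d y) + (c y d + (m.map _).sum) :=
            add_le_add (htri x d y) (ih y)
        _ = c x d + ((c d y + c y d) + (m.map _).sum) := by ring
  cases l with
  | nil => simp [hcrefl]
  | cons x m =>
    rw [pcost_cons, List.map_cons, List.sum_cons]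
    calc c d x + pcost c x m d ≤ c d x + (c x d + (m.map _).sum) :=
          add_le_add_right (aux x m) _
      _ = (c d x + c x d) + (m.map _).sum := by ring

lemma cycCost_cons (a : V) (l : List V) : cycCost c (a :: l) = pcost c a l a := by
  have : (a :: l).rotate 1 = l ++ [a] := by
    simpa using List.rotate_cons_succ l a 0
  simp [cycCost, this, pcost]

lemma cycCost_nonneg (hc0 : ∀ x y, 0 ≤ c x y) (l : List V) : 0 ≤ cycCost c l := by
  cases l with
  | nil => simp [cycCost]
  | cons a m => rw [cycCost_cons]; exact pcost_nonneg hc0 a a m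

lemma cycCost_rotate_one (l : List V) : cycCost c (l.rotate 1) = cycCost c l := by
  cases l with
  | nil => simp
  | cons a m =>
    have h1 : (a :: m).rotate 1 = m ++ [a] := by simpa using List.rotate_cons_succ m a 0
    rw [h1]
    cases m with
    | nil => simp
    | cons x m' =>
      rw [List.cons_append, cycCost_cons, cycCost_cons, pcost_snoc, pcost_cons]
      ring

lemma cycCost_rotate (l : List V) (k : ℕ) : cycCost c (l.rotate k) = cycCost c l := by
  induction k generalizing l with
  | zero => simp
  | succ k ih =>
    have : l.rotate (k + 1) = (l.rotate 1).rotate k := by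
      rw [List.rotate_rotate, add_comm]
    rw [this, ih, cycCost_rotate_one]

lemma cycCost_tail_le (hc0 : ∀ x y, 0 ≤ c x y)
    (htri : ∀ x y z, c x z ≤ c x y + c y z) (a : V) (l : List V) :
    cycCost c l ≤ cycCost c (a :: l) := by
  cases l with
  | nil => simpa [cycCost] using pcost_nonneg hc0 a a []
  | cons x m =>
    rw [cycCost_cons, cycCost_cons, pcost_cons]
    calc pcost c x m x ≤ pcost c x m a + c a x := pcost_last_tri htri x a x m
      _ = c a x + pcost c x m a := by ring

lemma cycCost_filter (hc0 : ∀ x y, 0 ≤ c x y)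
    (htri : ∀ x y z, c x z ≤ c x y + c y z) (l : List V) (P : V → Bool) :
    cycCost c (l.filter P) ≤ cycCost c l := by
  induction l with
  | nil => simp
  | cons a m ih =>
    by_cases ha : P a
    · rw [List.filter_cons_of_pos ha, cycCost_cons, cycCost_cons]
      exact pcost_filter htri a a m P
    · rw [List.filter_cons_of_neg (by simpa using ha)]
      exact ih.trans (cycCost_tail_le hc0 htri a m)

end Lists




section TSPLemmas
variable {V : Type*} [DecidableEq V] {c : V → V → ℝ}

lemma tspSet_nonempty (c : V → V → ℝ) (A : Finset V) :
    {x : ℝ | ∃ l : List V, IsTour A l ∧ x = cycCost c l}.Nonempty :=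
  ⟨cycCost c A.toList, A.toList, ⟨A.nodup_toList, A.toList_toFinset⟩, rfl⟩

lemma tspSet_bddBelow (hc0 : ∀ x y, 0 ≤ c x y) (A : Finset V) :
    BddBelow {x : ℝ | ∃ l : List V, IsTour A l ∧ x = cycCost c l} := by
  refine ⟨0, fun x hx => ?_⟩
  obtain ⟨l, -, rfl⟩ := hx
  exact cycCost_nonneg hc0 l

lemma TSP_nonneg (hc0 : ∀ x y, 0 ≤ c x y) (A : Finset V) : 0 ≤ TSP c A := by
  apply Real.sInf_nonneg
  rintro x ⟨l, -, rfl⟩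
  exact cycCost_nonneg hc0 l

lemma TSP_le_cycCost (hc0 : ∀ x y, 0 ≤ c x y) {A : Finset V} {l : List V}
    (h : IsTour A l) : TSP c A ≤ cycCost c l :=
  csInf_le (tspSet_bddBelow hc0 A) ⟨l, h, rfl⟩

lemma TSP_mono (hc0 : ∀ x y, 0 ≤ c x y) (htri : ∀ x y z, c x z ≤ c x y + c y z)
    {A B : Finset V} (hBA : B ⊆ A) : TSP c B ≤ TSP c A := by
  apply le_csInf (tspSet_nonempty c A)
  rintro x ⟨l, ⟨hnd, htf⟩, rfl⟩
  have htour : IsTour B (l.filter (fun v => v ∈ B)) := by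
    constructor
    · exact hnd.filter _
    · rw [List.toFinset_filter, htf]
      ext v
      simp only [Finset.mem_filter, decide_eq_true_eq]
      exact ⟨fun h => h.2, fun h => ⟨hBA h, h⟩⟩
  exact (TSP_le_cycCost hc0 htour).trans (cycCost_filter hc0 htri l _)

lemma tour_to_depot {A : Finset V} {l : List V} (hA : IsTour A l) {d : V} (hd : d ∈ A) :
    ∃ t : List V, l.rotate (l.idxOf d) = d :: t ∧ (d :: t).Nodup ∧
      t.toFinset = A.erase d ∧ cycCost c (d :: t) = cycCost c l := by
  obtain ⟨hnd, htf⟩ := hA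
  have hdl : d ∈ l := by rw [← List.mem_toFinset, htf]; exact hd
  have hi : l.idxOf d < l.length := List.idxOf_lt_length_iff.2 hdl
  have hrot : l.rotate (l.idxOf d) = d :: (l.drop (l.idxOf d + 1) ++ l.take (l.idxOf d)) := by
    rw [List.rotate_eq_drop_append_take hi.le, List.drop_eq_getElem_cons hi,
      List.getElem_idxOf hi, List.cons_append]
  refine ⟨_, hrot, ?_, ?_, ?_⟩
  · rw [← hrot]; exact ((l.rotate_perm _).nodup_iff).2 hnd
  · have hperm : List.Perm (l.rotate (l.idxOf d)) l := l.rotate_perm _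
    have htf2 : (d :: (l.drop (l.idxOf d + 1) ++ l.take (l.idxOf d))).toFinset = A := by
      rw [← hrot, List.toFinset_eq_of_perm _ _ hperm, htf]
    have hnd2 : (d :: (l.drop (l.idxOf d + 1) ++ l.take (l.idxOf d))).Nodup := by
      rw [← hrot]; exact ((l.rotate_perm _).nodup_iff).2 hnd
    have hdnot : d ∉ (l.drop (l.idxOf d + 1) ++ l.take (l.idxOf d)) :=
      (List.nodup_cons.1 hnd2).1
    rw [List.toFinset_cons] at htf2
    rw [← htf2, Finset.erase_insert (by simpa using hdnot)]
  · rw [← hrot, cycCost_rotate]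

lemma TSP_union_le (hc0 : ∀ x y, 0 ≤ c x y) (hcrefl : ∀ v, c v v = 0)
    (htri : ∀ x y z, c x z ≤ c x y + c y z) (d : V) {A B : Finset V}
    (hdA : d ∉ A) (hdB : d ∉ B) (hAB : Disjoint A B) :
    TSP c (insert d (A ∪ B)) ≤ TSP c (insert d A) + TSP c (insert d B) := by
  have key : ∀ x ∈ {x : ℝ | ∃ l, IsTour (insert d A) l ∧ x = cycCost c l},
      ∀ y ∈ {x : ℝ | ∃ l, IsTour (insert d B) l ∧ x = cycCost c l},
      TSP c (insert d (A ∪ B)) ≤ x + y := by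
    rintro x ⟨l₁, h₁, rfl⟩ y ⟨l₂, h₂, rfl⟩
    obtain ⟨t₁, -, hnd₁, htf₁, hcost₁⟩ := tour_to_depot (c := c) h₁ (Finset.mem_insert_self d A)
    obtain ⟨t₂, -, hnd₂, htf₂, hcost₂⟩ := tour_to_depot (c := c) h₂ (Finset.mem_insert_self d B)
    rw [Finset.erase_insert hdA] at htf₁
    rw [Finset.erase_insert hdB] at htf₂
    have hmem₁ : ∀ v ∈ t₁, v ∈ A := fun v hv => by
      rw [← htf₁]; exact List.mem_toFinset.2 hv
    have hmem₂ : ∀ v ∈ t₂, v ∈ B := fun v hv => by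
      rw [← htf₂]; exact List.mem_toFinset.2 hv
    have hdt₁ : d ∉ t₁ := (List.nodup_cons.1 hnd₁).1
    have hdt₂ : d ∉ t₂ := (List.nodup_cons.1 hnd₂).1
    have htour : IsTour (insert d (A ∪ B)) (d :: (t₁ ++ t₂)) := by
      constructor
      · rw [List.nodup_cons]
        refine ⟨by simp [hdt₁, hdt₂], ?_⟩
        refine ((List.nodup_cons.1 hnd₁).2).append ((List.nodup_cons.1 hnd₂).2) ?_
        intro v hv₁ hv₂
        exact (Finset.disjoint_left.1 hAB) (hmem₁ v hv₁) (hmem₂ v hv₂)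
      · rw [List.toFinset_cons, List.toFinset_append, htf₁, htf₂]
    calc TSP c (insert d (A ∪ B)) ≤ cycCost c (d :: (t₁ ++ t₂)) := TSP_le_cycCost hc0 htour
      _ = pcost c d (t₁ ++ t₂) d := cycCost_cons d _
      _ ≤ pcost c d t₁ d + pcost c d t₂ d := pcost_append hcrefl htri d t₁ t₂
      _ = cycCost c (d :: t₁) + cycCost c (d :: t₂) := by rw [cycCost_cons, cycCost_cons]
      _ = cycCost c l₁ + cycCost c l₂ := by rw [hcost₁, hcost₂]
  have h2 : ∀ x ∈ {x : ℝ | ∃ l, IsTour (insert d A) l ∧ x = cycCost c l},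
      TSP c (insert d (A ∪ B)) - TSP c (insert d B) ≤ x := by
    intro x hx
    have : TSP c (insert d (A ∪ B)) - x ≤ TSP c (insert d B) :=
      le_csInf (tspSet_nonempty c _) (fun y hy => by linarith [key x hx y hy])
    linarith
  have h3 : TSP c (insert d (A ∪ B)) - TSP c (insert d B) ≤ TSP c (insert d A) :=
    le_csInf (tspSet_nonempty c (insert d A)) h2
  linarith

lemma TSP_pair_ge (hc0 : ∀ x y, 0 ≤ c x y) {v d : V} (hvd : v ≠ d) :
    c d v + c v d ≤ TSP c {v, d} := by
  apply le_csInf (tspSet_nonempty c _)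
  rintro x ⟨l, ⟨hnd, htf⟩, rfl⟩
  have hlen : l.length = 2 := by
    have h1 : l.toFinset.card = l.length := List.toFinset_card_of_nodup hnd
    rw [htf, Finset.card_pair hvd] at h1
    omega
  obtain ⟨a, b, rfl⟩ := List.length_eq_two.1 hlen
  have hab : a ≠ b := by simpa using (List.nodup_cons.1 hnd).1
  have hav : a ∈ ({v, d} : Finset V) := by rw [← htf]; simp
  have hbv : b ∈ ({v, d} : Finset V) := by rw [← htf]; simp
  have hcost : cycCost c [a, b] = c a b + c b a := by
    rw [cycCost_cons]; simp
  rw [hcost]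
  simp only [Finset.mem_insert, Finset.mem_singleton] at hav hbv
  rcases hav with rfl | rfl
  · rcases hbv with rfl | rfl
    · exact absurd rfl hab
    · linarith
  · rcases hbv with rfl | rfl
    · linarith
    · exact absurd rfl hab

end TSPLemmas

section Bexp
variable {V : Type*} [DecidableEq V]

/-- Expectation of `g` over a Bernoulli random subset of `W` with probabilities `r`. -/
def bexp (W : Finset V) (r : V → ℝ) (g : Finset V → ℝ) : ℝ :=
  ∑ B ∈ W.powerset, (∏ v ∈ B, r v) * (∏ v ∈ W \ B, (1 - r v)) * g B

@[simp] lemma bexp_empty (r : V → ℝ) (g : Finset V → ℝ) : bexp (∅ : Finset V) r g = g ∅ := by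
  simp [bexp]

lemma bexp_insert {v : V} {W : Finset V} (hv : v ∉ W) (r : V → ℝ) (g : Finset V → ℝ) :
    bexp (insert v W) r g =
      r v * bexp W r (fun B => g (insert v B)) + (1 - r v) * bexp W r g := by
  rw [bexp, Finset.sum_powerset_insert hv]
  have h1 : ∑ B ∈ W.powerset, (∏ u ∈ B, r u) * (∏ u ∈ insert v W \ B, (1 - r u)) * g B
      = (1 - r v) * bexp W r g := by
    rw [bexp, Finset.mul_sum]
    refine Finset.sum_congr rfl fun B hB => ?_
    have hvB : v ∉ B := fun h => hv (Finset.mem_powerset.1 hB h)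
    have hvWB : v ∉ W \ B := fun h => hv (Finset.mem_sdiff.1 h).1
    rw [Finset.insert_sdiff_of_notMem _ hvB, Finset.prod_insert hvWB]
    ring
  have h2 : ∑ B ∈ W.powerset, (∏ u ∈ insert v B, r u) * (∏ u ∈ insert v W \ insert v B, (1 - r u))
        * g (insert v B) = r v * bexp W r (fun B => g (insert v B)) := by
    rw [bexp, Finset.mul_sum]
    refine Finset.sum_congr rfl fun B hB => ?_
    have hvB : v ∉ B := fun h => hv (Finset.mem_powerset.1 hB h)
    rw [Finset.insert_sdiff_insert, Finset.sdiff_insert_of_notMem hv, Finset.prod_insert hvB]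
    ring
  rw [h1, h2]
  ring

lemma bexp_congr {W : Finset V} {r : V → ℝ} {g₁ g₂ : Finset V → ℝ}
    (h : ∀ B ⊆ W, g₁ B = g₂ B) : bexp W r g₁ = bexp W r g₂ :=
  Finset.sum_congr rfl fun B hB => by rw [h B (Finset.mem_powerset.1 hB)]

lemma bexp_const (W : Finset V) (r : V → ℝ) (x : ℝ) : bexp W r (fun _ => x) = x := by
  induction W using Finset.induction_on with
  | empty => simp
  | insert _ _ hv ih => rw [bexp_insert hv]; rw [ih]; ring

lemma bexp_add (W : Finset V) (r : V → ℝ) (g h : Finset V → ℝ) :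
    bexp W r (fun B => g B + h B) = bexp W r g + bexp W r h := by
  rw [bexp, bexp, bexp, ← Finset.sum_add_distrib]
  exact Finset.sum_congr rfl fun B _ => by ring

lemma bexp_smul (W : Finset V) (r : V → ℝ) (g : Finset V → ℝ) (x : ℝ) :
    bexp W r (fun B => x * g B) = x * bexp W r g := by
  rw [bexp, bexp, Finset.mul_sum]
  exact Finset.sum_congr rfl fun B _ => by ring

lemma bexp_mono {W : Finset V} {r : V → ℝ} (hr0 : ∀ v ∈ W, 0 ≤ r v)
    (hr1 : ∀ v ∈ W, r v ≤ 1) {g₁ g₂ : Finset V → ℝ} (h : ∀ B ⊆ W, g₁ B ≤ g₂ B) :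
    bexp W r g₁ ≤ bexp W r g₂ := by
  refine Finset.sum_le_sum fun B hB => ?_
  have hw : 0 ≤ (∏ v ∈ B, r v) * ∏ v ∈ W \ B, (1 - r v) := by
    apply mul_nonneg
    · exact Finset.prod_nonneg fun v hv => hr0 v (Finset.mem_powerset.1 hB hv)
    · exact Finset.prod_nonneg fun v hv => by
        have := hr1 v (Finset.mem_sdiff.1 hv).1
        linarith
  exact mul_le_mul_of_nonneg_left (h B (Finset.mem_powerset.1 hB)) hw

lemma bexp_nonneg {W : Finset V} {r : V → ℝ} (hr0 : ∀ v ∈ W, 0 ≤ r v)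
    (hr1 : ∀ v ∈ W, r v ≤ 1) {g : Finset V → ℝ} (h : ∀ B ⊆ W, 0 ≤ g B) :
    0 ≤ bexp W r g := by
  have := bexp_mono (W := W) (r := r) hr0 hr1 (g₁ := fun _ => 0) (g₂ := g) (by simpa using h)
  rwa [bexp_const] at this

lemma bexp_one (W : Finset V) (g : Finset V → ℝ) : bexp W (fun _ => 1) g = g W := by
  induction W using Finset.induction_on generalizing g with
  | empty => simp
  | @insert v W hv ih => rw [bexp_insert hv, ih, ih]; ring_nf

lemma bexp_compl (W : Finset V) (r : V → ℝ) (g : Finset V → ℝ) :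
    bexp W r (fun A => g (W \ A)) = bexp W (fun v => 1 - r v) g := by
  induction W using Finset.induction_on generalizing g with
  | empty => simp
  | @insert v W hv ih =>
    rw [bexp_insert hv, bexp_insert hv]
    have e1 : bexp W r (fun A => g (insert v W \ insert v A)) = bexp W r (fun A => g (W \ A)) := by
      refine bexp_congr fun A hA => ?_
      have hvA : v ∉ A := fun h => hv (hA h)
      rw [Finset.insert_sdiff_insert, Finset.sdiff_insert_of_notMem hv]
    have e2 : bexp W r (fun A => g (insert v W \ A)) =
        bexp W r (fun A => g (insert v (W \ A))) := by
      refine bexp_congr fun A hA => ?_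
      have hvA : v ∉ A := fun h => hv (hA h)
      rw [Finset.insert_sdiff_of_notMem _ hvA]
    rw [e1, e2, ih, ih (fun B => g (insert v B))]
    ring

lemma bexp_thin (W : Finset V) (r s : V → ℝ) (g : Finset V → ℝ) :
    bexp W r (fun A => bexp A s g) = bexp W (fun v => r v * s v) g := by
  induction W using Finset.induction_on generalizing g with
  | empty => simp
  | @insert v W hv ih =>
    rw [bexp_insert hv, bexp_insert hv]
    have e1 : bexp W r (fun A => bexp (insert v A) s g) =
        bexp W r (fun A => s v * bexp A s (fun B => g (insert v B)) + (1 - s v) * bexp A s g) := by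
      refine bexp_congr fun A hA => ?_
      exact bexp_insert (fun h => hv (hA h)) s g
    rw [e1]
    have e2 : bexp W r
        (fun A => s v * bexp A s (fun B => g (insert v B)) + (1 - s v) * bexp A s g) =
        s v * bexp W (fun u => r u * s u) (fun B => g (insert v B)) +
          (1 - s v) * bexp W (fun u => r u * s u) g := by
      rw [bexp_add, ← ih, ← ih (g := g)]
      rw [bexp_smul, bexp_smul]
    rw [e2, ih]
    ring

lemma bexp_mono_prob {W : Finset V} {r r' : V → ℝ} (hr0 : ∀ v ∈ W, 0 ≤ r v)
    (hrr' : ∀ v ∈ W, r v ≤ r' v) (hr'1 : ∀ v ∈ W, r' v ≤ 1) {g : Finset V → ℝ}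
    (hg : ∀ B v, g B ≤ g (insert v B)) :
    bexp W r g ≤ bexp W r' g := by
  induction W using Finset.induction_on generalizing g with
  | empty => simp
  | @insert v W hv ih =>
    have hr0' : ∀ u ∈ W, 0 ≤ r u := fun u hu => hr0 u (Finset.mem_insert_of_mem hu)
    have hrr'' : ∀ u ∈ W, r u ≤ r' u := fun u hu => hrr' u (Finset.mem_insert_of_mem hu)
    have hr'1' : ∀ u ∈ W, r' u ≤ 1 := fun u hu => hr'1 u (Finset.mem_insert_of_mem hu)
    have hr1 : ∀ u ∈ W, r u ≤ 1 := fun u hu => (hrr'' u hu).trans (hr'1' u hu)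
    rw [bexp_insert hv, bexp_insert hv]
    have hXY : bexp W r g ≤ bexp W r (fun B => g (insert v B)) :=
      bexp_mono hr0' hr1 (fun B _ => hg B v)
    have hv0 : 0 ≤ r v := hr0 v (Finset.mem_insert_self v W)
    have hv1 : r v ≤ r' v := hrr' v (Finset.mem_insert_self v W)
    have hv2 : r' v ≤ 1 := hr'1 v (Finset.mem_insert_self v W)
    have step1 : r v * bexp W r (fun B => g (insert v B)) + (1 - r v) * bexp W r g ≤
        r' v * bexp W r (fun B => g (insert v B)) + (1 - r' v) * bexp W r g := by
      nlinarith [hXY]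
    have step2 : r' v * bexp W r (fun B => g (insert v B)) + (1 - r' v) * bexp W r g ≤
        r' v * bexp W r' (fun B => g (insert v B)) + (1 - r' v) * bexp W r' g := by
      have i1 := ih (g := fun B => g (insert v B)) hr0' hrr'' hr'1'
        (fun B u => by
          have hcomm : insert v (insert u B) = insert u (insert v B) := by
            ext x; simp only [Finset.mem_insert]; tauto
          show g (insert v B) ≤ g (insert v (insert u B))
          rw [hcomm]; exact hg _ u)
      have i2 := ih (g := g) hr0' hrr'' hr'1' hg
      have h1 : (0:ℝ) ≤ r' v := hv0.trans hv1
      have h2 : (0:ℝ) ≤ 1 - r' v := by linarith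
      nlinarith [i1, i2]
    exact step1.trans step2

lemma bexp_proj_aux (W : Finset V) (r : V → ℝ) (h : Finset V → ℝ) :
    ∀ D : Finset V, Disjoint W D → bexp (W ∪ D) r (fun A => h (A ∩ W)) = bexp W r h := by
  intro D
  induction D using Finset.induction_on with
  | empty =>
    intro _
    rw [Finset.union_empty]
    exact bexp_congr fun A hA => by rw [Finset.inter_eq_left.2 hA]
  | @insert v D hv ih =>
    intro hdisj
    have hvW : v ∉ W := fun h' => (Finset.disjoint_left.1 hdisj h') (Finset.mem_insert_self v D)
    have hWD : Disjoint W D := hdisj.mono_right (Finset.subset_insert v D)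
    have hvWD : v ∉ W ∪ D := by
      simp only [Finset.mem_union]
      rintro (h' | h')
      · exact hvW h'
      · exact hv h'
    rw [Finset.union_insert, bexp_insert hvWD]
    have e1 : bexp (W ∪ D) r (fun A => h (insert v A ∩ W)) =
        bexp (W ∪ D) r (fun A => h (A ∩ W)) := by
      refine bexp_congr fun A _ => ?_
      rw [Finset.insert_inter_of_notMem hvW]
    rw [e1, ih hWD]
    ring

lemma bexp_proj {W U : Finset V} (hWU : W ⊆ U) (r : V → ℝ) (h : Finset V → ℝ) :
    bexp U r (fun A => h (A ∩ W)) = bexp W r h := by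
  have := bexp_proj_aux W r h (U \ W) Finset.disjoint_sdiff
  rwa [Finset.union_sdiff_of_subset hWU] at this

end Bexp


section ApExpect
variable {V : Type*} [Fintype V] [DecidableEq V] {p : V → ℝ}

lemma apExpect_eq_bexp (p : V → ℝ) (f : Finset V → ℝ) :
    apExpect p f = bexp Finset.univ p f := by
  rw [apExpect, bexp, Finset.powerset_univ]
  exact Finset.sum_congr rfl fun A _ => by rw [Finset.compl_eq_univ_sdiff]

lemma apExpect_const (p : V → ℝ) (x : ℝ) : apExpect p (fun _ => x) = x := by
  rw [apExpect_eq_bexp, bexp_const]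

lemma apExpect_add (p : V → ℝ) (f g : Finset V → ℝ) :
    apExpect p (fun A => f A + g A) = apExpect p f + apExpect p g := by
  rw [apExpect_eq_bexp, apExpect_eq_bexp, apExpect_eq_bexp, bexp_add]

lemma apExpect_sum (p : V → ℝ) {ι : Type*} (s : Finset ι) (h : ι → Finset V → ℝ) :
    apExpect p (fun A => ∑ i ∈ s, h i A) = ∑ i ∈ s, apExpect p (h i) := by
  rw [apExpect]
  have e : ∀ A : Finset V, ((∏ v ∈ A, p v) * ∏ v ∈ Aᶜ, (1 - p v)) * ∑ i ∈ s, h i A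
      = ∑ i ∈ s, ((∏ v ∈ A, p v) * ∏ v ∈ Aᶜ, (1 - p v)) * h i A := fun A => Finset.mul_sum _ _ _
  rw [Finset.sum_congr rfl fun A _ => e A, Finset.sum_comm]
  rfl

lemma apExpect_mono_d (hp0 : ∀ v, 0 ≤ p v) (hp1 : ∀ v, p v ≤ 1) {d : V} (hd : p d = 1)
    {f g : Finset V → ℝ}
    (h : ∀ A : Finset V, d ∈ A → f A ≤ g A) : apExpect p f ≤ apExpect p g := by
  refine Finset.sum_le_sum fun A _ => ?_
  by_cases hdA : d ∈ A
  · refine mul_le_mul_of_nonneg_left (h A hdA) ?_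
    apply mul_nonneg (Finset.prod_nonneg fun v _ => hp0 v)
    exact Finset.prod_nonneg fun v _ => by linarith [hp1 v]
  · have hzero : (∏ v ∈ Aᶜ, (1 - p v)) = 0 :=
      Finset.prod_eq_zero (Finset.mem_compl.2 hdA) (by rw [hd]; ring)
    rw [hzero, mul_zero, zero_mul, zero_mul]

lemma apExpect_indicator (p : V → ℝ) (v : V) (y : ℝ) :
    apExpect p (fun A => if v ∈ A then y else 0) = p v * y := by
  rw [apExpect_eq_bexp]
  have e1 : bexp Finset.univ p (fun A => if v ∈ A then y else 0) =
      bexp Finset.univ p (fun A => (fun B => if v ∈ B then y else 0) (A ∩ {v})) := by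
    refine bexp_congr fun A _ => ?_
    simp only [Finset.mem_inter, Finset.mem_singleton]
    by_cases h : v ∈ A <;> simp [h]
  rw [e1, bexp_proj (W := {v}) (Finset.subset_univ {v}) p (fun B => if v ∈ B then y else 0)]
  have e2 : ({v} : Finset V) = insert v ∅ := rfl
  rw [e2, bexp_insert (Finset.notMem_empty v), bexp_empty, bexp_empty]
  simp

end ApExpect

section ProbTSP
variable {V : Type*} [Fintype V] [DecidableEq V] {c : V → V → ℝ} {p : V → ℝ} {d : V}

lemma bexp_tsp_le_apExpect (hc0 : ∀ x y, 0 ≤ c x y) (htri : ∀ x y z, c x z ≤ c x y + c y z)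
    (hp0 : ∀ v, 0 ≤ p v) (hp1 : ∀ v, p v ≤ 1) (hd : p d = 1) (W : Finset V) :
    bexp W p (fun B => TSP c (insert d B)) ≤ apExpect p (fun A => TSP c A) := by
  rw [← bexp_proj (W := W) (Finset.subset_univ W) p (fun B => TSP c (insert d B)),
    ← apExpect_eq_bexp]
  refine apExpect_mono_d hp0 hp1 hd fun A hdA => ?_
  refine TSP_mono hc0 htri ?_
  refine Finset.insert_subset hdA ?_
  exact (Finset.inter_subset_left)

lemma TSP_le_k_bexp (hc0 : ∀ x y, 0 ≤ c x y) (hcrefl : ∀ v, c v v = 0)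
    (htri : ∀ x y z, c x z ≤ c x y + c y z) :
    ∀ k : ℕ, 1 ≤ k → ∀ W : Finset V, d ∉ W →
      TSP c (insert d W) ≤ k * bexp W (fun _ => 1 / (k : ℝ)) (fun B => TSP c (insert d B)) := by
  intro k
  induction k with
  | zero => omega
  | succ n ihn =>
    intro _ W hdW
    rcases Nat.eq_zero_or_pos n with hn | hn
    · subst hn
      have e : (fun _ : V => 1 / ((1 : ℕ) : ℝ)) = fun _ : V => (1 : ℝ) := by
        funext _; norm_num
      rw [show ((0:ℕ)+1) = 1 from rfl, e, bexp_one]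
      norm_num
    · have hstep : ∀ A ⊆ W, TSP c (insert d W) ≤
          TSP c (insert d (W \ A)) +
            n * bexp A (fun _ => 1 / (n : ℝ)) (fun B => TSP c (insert d B)) := by
        intro A hA
        have hdA : d ∉ A := fun h => hdW (hA h)
        have hdWA : d ∉ W \ A := fun h => hdW (Finset.mem_sdiff.1 h).1
        have h1 : TSP c (insert d ((W \ A) ∪ A)) ≤
            TSP c (insert d (W \ A)) + TSP c (insert d A) :=
          TSP_union_le hc0 hcrefl htri d hdWA hdA Finset.sdiff_disjoint
        rw [Finset.sdiff_union_of_subset hA] at h1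
        have h2 := ihn hn A hdA
        linarith
      set g : Finset V → ℝ := fun B => TSP c (insert d B) with hg
      set a : ℝ := (n : ℝ) / ((n : ℝ) + 1) with ha
      have hn1 : (1:ℝ) ≤ (n:ℝ) := by exact_mod_cast hn
      have ha0 : 0 ≤ a := by positivity
      have ha1 : a ≤ 1 := by rw [ha, div_le_one (by linarith)]; linarith
      have hb : TSP c (insert d W) = bexp W (fun _ => a) (fun _ => TSP c (insert d W)) :=
        (bexp_const W _ _).symm
      have hmono : bexp W (fun _ => a) (fun _ => TSP c (insert d W)) ≤
          bexp W (fun _ => a) (fun A => g (W \ A) + n * bexp A (fun _ => 1 / (n : ℝ)) g) :=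
        bexp_mono (fun _ _ => ha0) (fun _ _ => ha1) (fun A hA => hstep A hA)
      have hsplit : bexp W (fun _ => a) (fun A => g (W \ A) + n * bexp A (fun _ => 1 / (n:ℝ)) g)
          = bexp W (fun _ => a) (fun A => g (W \ A)) +
            n * bexp W (fun _ => a) (fun A => bexp A (fun _ => 1 / (n:ℝ)) g) := by
        rw [bexp_add, bexp_smul]
      have hcompl : bexp W (fun _ => a) (fun A => g (W \ A)) =
          bexp W (fun _ => 1 / ((n:ℝ) + 1)) g := by
        rw [bexp_compl]
        congr 1
        funext _
        rw [ha]
        field_simp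
        ring
      have hthin : bexp W (fun _ => a) (fun A => bexp A (fun _ => 1 / (n:ℝ)) g) =
          bexp W (fun _ => 1 / ((n:ℝ) + 1)) g := by
        rw [bexp_thin]
        congr 1
        funext _
        rw [ha]
        field_simp
      have hcast : ((n + 1 : ℕ) : ℝ) = (n : ℝ) + 1 := by push_cast; ring
      calc TSP c (insert d W)
          = bexp W (fun _ => a) (fun _ => TSP c (insert d W)) := hb
        _ ≤ _ := hmono
        _ = bexp W (fun _ => 1 / ((n:ℝ)+1)) g + n * bexp W (fun _ => 1 / ((n:ℝ)+1)) g := by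
            rw [hsplit, hcompl, hthin]
        _ = (n + 1 : ℕ) * bexp W (fun _ => 1 / ((n + 1 : ℕ) : ℝ)) g := by
            rw [hcast]; ring

lemma bexp_ge_weighted (hc0 : ∀ x y, 0 ≤ c x y) (htri : ∀ x y z, c x z ≤ c x y + c y z)
    (hp0 : ∀ v, 0 ≤ p v) (hp1 : ∀ v, p v ≤ 1) (U : Finset V) (hU : ∀ v ∈ U, v ≠ d) :
    (∑ v ∈ U, p v * (c d v + c v d)) * (1 - ∑ v ∈ U, p v) ≤
      bexp U p (fun B => TSP c (insert d B)) := by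
  induction U using Finset.induction_on with
  | empty => simpa using TSP_nonneg hc0 {d}
  | @insert v U hv ih =>
    have hUd : ∀ u ∈ U, u ≠ d := fun u hu => hU u (Finset.mem_insert_of_mem hu)
    have hvd : v ≠ d := hU v (Finset.mem_insert_self v U)
    rw [bexp_insert hv, Finset.sum_insert hv, Finset.sum_insert hv]
    set S := ∑ u ∈ U, p u * (c d u + c u d) with hS
    set M := ∑ u ∈ U, p u with hM
    have hS0 : 0 ≤ S := Finset.sum_nonneg fun u _ =>
      mul_nonneg (hp0 u) (add_nonneg (hc0 d u) (hc0 u d))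
    have hM0 : 0 ≤ M := Finset.sum_nonneg fun u _ => hp0 u
    have hqv : 0 ≤ c d v + c v d := add_nonneg (hc0 d v) (hc0 v d)
    have hX : c d v + c v d ≤ bexp U p (fun B => TSP c (insert d (insert v B))) := by
      have h1 : ∀ B ⊆ U, c d v + c v d ≤ TSP c (insert d (insert v B)) := by
        intro B _
        refine (TSP_pair_ge hc0 hvd).trans (TSP_mono hc0 htri ?_)
        intro x hx
        simp only [Finset.mem_insert, Finset.mem_singleton] at hx ⊢
        tauto
      have := bexp_mono (W := U) (r := p) (fun u _ => hp0 u) (fun u _ => hp1 u)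
        (g₁ := fun _ => c d v + c v d) (g₂ := fun B => TSP c (insert d (insert v B))) h1
      rwa [bexp_const] at this
    have hY := ih hUd
    have hpv0 := hp0 v
    have hpv1 := hp1 v
    have hchain : p v * (c d v + c v d) + (1 - p v) * (S * (1 - M)) ≤
        p v * bexp U p (fun B => TSP c (insert d (insert v B))) +
          (1 - p v) * bexp U p (fun B => TSP c (insert d B)) := by
      have t1 : p v * (c d v + c v d) ≤
          p v * bexp U p (fun B => TSP c (insert d (insert v B))) :=
        mul_le_mul_of_nonneg_left hX hpv0
      have t2 : (1 - p v) * (S * (1 - M)) ≤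
          (1 - p v) * bexp U p (fun B => TSP c (insert d B)) :=
        mul_le_mul_of_nonneg_left hY (by linarith)
      linarith
    refine le_trans ?_ hchain
    nlinarith [mul_nonneg hpv0 hqv, mul_nonneg hS0 hM0, mul_nonneg (mul_nonneg hpv0 hpv0) hqv,
      mul_nonneg hpv0 (mul_nonneg hqv hM0), mul_nonneg hpv0 (mul_nonneg hS0 hM0)]

lemma single_bound (hc0 : ∀ x y, 0 ≤ c x y) (htri : ∀ x y z, c x z ≤ c x y + c y z)
    (hp0 : ∀ v, 0 ≤ p v) (hp1 : ∀ v, p v ≤ 1) (hd : p d = 1) {v : V} (hvd : v ≠ d) :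
    p v * (c d v + c v d) ≤ apExpect p (fun A => TSP c A) := by
  have hbr := bexp_tsp_le_apExpect hc0 htri hp0 hp1 hd {v}
  have e2 : ({v} : Finset V) = insert v ∅ := rfl
  rw [e2, bexp_insert (Finset.notMem_empty v), bexp_empty, bexp_empty] at hbr
  have h1 : c d v + c v d ≤ TSP c (insert d (insert v ∅)) := by
    refine (TSP_pair_ge hc0 hvd).trans (TSP_mono hc0 htri ?_)
    intro x hx
    simp only [Finset.mem_insert, Finset.mem_singleton, Finset.notMem_empty, or_false] at hx ⊢
    tauto
  have h2 : 0 ≤ TSP c (insert d ∅) := TSP_nonneg hc0 _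
  nlinarith [hp0 v, hp1 v]

lemma group_bound (hc0 : ∀ x y, 0 ≤ c x y) (htri : ∀ x y z, c x z ≤ c x y + c y z)
    (hp0 : ∀ v, 0 ≤ p v) (hp1 : ∀ v, p v ≤ 1) (hd : p d = 1) (U : Finset V)
    (hU : ∀ v ∈ U, v ≠ d) (hM : ∑ v ∈ U, p v ≤ 1/2) :
    ∑ v ∈ U, p v * (c d v + c v d) ≤ 2 * apExpect p (fun A => TSP c A) := by
  have h1 := bexp_ge_weighted hc0 htri hp0 hp1 U hU
  have h2 := bexp_tsp_le_apExpect hc0 htri hp0 hp1 hd U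
  have hS0 : 0 ≤ ∑ v ∈ U, p v * (c d v + c v d) := Finset.sum_nonneg fun u _ =>
    mul_nonneg (hp0 u) (add_nonneg (hc0 d u) (hc0 u d))
  nlinarith

lemma exists_medium (p : V → ℝ) (hp0 : ∀ v, 0 ≤ p v) (W : Finset V) :
    (∀ v ∈ W, p v ≤ 1/4) → 1/4 ≤ ∑ v ∈ W, p v →
    ∃ U, U ⊆ W ∧ 1/4 ≤ ∑ v ∈ U, p v ∧ ∑ v ∈ U, p v ≤ 1/2 := by
  induction W using Finset.induction_on with
  | empty => intro _ hM; norm_num at hM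
  | @insert v W hv ih =>
    intro hp4 hM
    by_cases h : 1/4 ≤ ∑ u ∈ W, p u
    · obtain ⟨U, hUW, h1, h2⟩ := ih (fun u hu => hp4 u (Finset.mem_insert_of_mem hu)) h
      exact ⟨U, hUW.trans (Finset.subset_insert v W), h1, h2⟩
    · push_neg at h
      refine ⟨insert v W, subset_rfl, hM, ?_⟩
      rw [Finset.sum_insert hv]
      have := hp4 v (Finset.mem_insert_self v W)
      linarith

lemma sum_pq_le (hc0 : ∀ x y, 0 ≤ c x y) (htri : ∀ x y z, c x z ≤ c x y + c y z)
    (hp0 : ∀ v, 0 ≤ p v) (hp1 : ∀ v, p v ≤ 1) (hd : p d = 1) (W : Finset V) :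
    (∀ v ∈ W, v ≠ d) →
    ∑ v ∈ W, p v * (c d v + c v d) ≤
      (8 * (∑ v ∈ W, p v) + 2) * apExpect p (fun A => TSP c A) := by
  induction W using Finset.strongInduction with
  | _ W ih =>
    intro hU
    have hE0 : 0 ≤ apExpect p (fun A => TSP c A) := by
      rw [apExpect_eq_bexp]
      exact bexp_nonneg (fun v _ => hp0 v) (fun v _ => hp1 v)
        (fun B _ => TSP_nonneg hc0 B)
    have hM0 : 0 ≤ ∑ v ∈ W, p v := Finset.sum_nonneg fun u _ => hp0 u
    by_cases hM : ∑ v ∈ W, p v ≤ 1/2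
    · have := group_bound hc0 htri hp0 hp1 hd W hU hM
      nlinarith
    · push_neg at hM
      by_cases hbig : ∃ v ∈ W, 1/4 < p v
      · obtain ⟨v, hvW, hpv⟩ := hbig
        have herase : W.erase v ⊂ W := Finset.erase_ssubset hvW
        have ihe := ih (W.erase v) herase (fun u hu => hU u (Finset.mem_of_mem_erase hu))
        have hsum1 : ∑ u ∈ W.erase v, p u * (c d u + c u d) + p v * (c d v + c v d)
            = ∑ u ∈ W, p u * (c d u + c u d) := Finset.sum_erase_add W _ hvW
        have hsum2 : ∑ u ∈ W.erase v, p u + p v = ∑ u ∈ W, p u :=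
          Finset.sum_erase_add W _ hvW
        have hsingle := single_bound hc0 htri hp0 hp1 hd (hU v hvW)
        nlinarith
      · push_neg at hbig
        obtain ⟨U, hUW, hU1, hU2⟩ := exists_medium p hp0 W hbig (by linarith)
        have hUne : U.Nonempty := by
          rcases Finset.eq_empty_or_nonempty U with rfl | h
          · simp at hU1; linarith
          · exact h
        have hsd : W \ U ⊂ W := Finset.sdiff_ssubset hUW hUne
        have ihsd := ih (W \ U) hsd (fun u hu => hU u (Finset.mem_sdiff.1 hu).1)
        have hsum1 : ∑ u ∈ W \ U, p u * (c d u + c u d) + ∑ u ∈ U, p u * (c d u + c u d)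
            = ∑ u ∈ W, p u * (c d u + c u d) := Finset.sum_sdiff hUW
        have hsum2 : ∑ u ∈ W \ U, p u + ∑ u ∈ U, p u = ∑ u ∈ W, p u :=
          Finset.sum_sdiff hUW
        have hgrp := group_bound hc0 htri hp0 hp1 hd U (fun u hu => hU u (hUW hu)) hU2
        nlinarith

end ProbTSP


/-- splitting the vertices into those with large (`≥ 1/√n`) and small
(`< 1/√n`) activation probability, concatenating an `α`-approximate ATSP tour on `V₁` with
any tour on `V₂` (both joined at the depot `d`) gives an a priori tour whose expected
short-cut cost is at most `(2α+12)·√n·E[TSP(A,c)]`. -/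
theorem statement12 {V : Type*} [Fintype V] [DecidableEq V]
    (c : V → V → ℝ) (p : V → ℝ)
    (hc0 : ∀ x y, 0 ≤ c x y)
    (hcrefl : ∀ v, c v v = 0)
    (htri : ∀ x y z, c x z ≤ c x y + c y z)
    (hp0 : ∀ v, 0 ≤ p v) (hp1 : ∀ v, p v ≤ 1)
    (d : V) (hd : p d = 1)
    (hn : 1 ≤ Fintype.card V)
    (V₁ V₂ : Finset V)
    (hV₁ : V₁ = Finset.univ.filter (fun v => 1 / Real.sqrt (Fintype.card V) ≤ p v))
    (hV₂ : V₂ = Finset.univ.filter (fun v => p v < 1 / Real.sqrt (Fintype.card V)) ∪ {d})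
    (α : ℝ) (hα : 1 ≤ α)
    (T₁ : List V) (hT₁ : IsTour V₁ T₁) (hT₁apx : cycCost c T₁ ≤ α * TSP c V₁)
    (T₂ : List V) (hT₂ : IsTour V₂ T₂)
    (T : List V)
    (hT : T = d :: ((T₁.rotate (T₁.idxOf d)).tail ++ (T₂.rotate (T₂.idxOf d)).tail)) :
    apExpect p (fun A => cycCost c (shortcut T A)) ≤
      (2 * α + 12) * Real.sqrt (Fintype.card V) * apExpect p (fun A => TSP c A) := by
  classical
  set n := Fintype.card V with hn'
  set s := Real.sqrt n with hs'
  have hs1 : (1:ℝ) ≤ s := by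
    rw [hs', Real.one_le_sqrt]
    exact_mod_cast hn
  have hs0 : (0:ℝ) < s := by linarith
  set E := apExpect p (fun A => TSP c A) with hE'
  have hE0 : 0 ≤ E := by
    rw [hE', apExpect_eq_bexp]
    exact bexp_nonneg (fun v _ => hp0 v) (fun v _ => hp1 v) (fun B _ => TSP_nonneg hc0 B)
  have hdV₁ : d ∈ V₁ := by
    rw [hV₁, Finset.mem_filter]
    refine ⟨Finset.mem_univ d, ?_⟩
    rw [hd, div_le_one hs0]
    exact hs1
  have hdV₂ : d ∈ V₂ := by
    rw [hV₂]
    exact Finset.mem_union_right _ (Finset.mem_singleton_self d)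
  obtain ⟨t₁, hrot₁, hnd₁, htf₁, hcost₁⟩ := tour_to_depot (c := c) hT₁ hdV₁
  obtain ⟨t₂, hrot₂, hnd₂, htf₂, hcost₂⟩ := tour_to_depot (c := c) hT₂ hdV₂
  have hTeq : T = d :: (t₁ ++ t₂) := by rw [hT, hrot₁, hrot₂]; rfl
  -- Pointwise bound on the shortcut cost
  have hpoint : ∀ A : Finset V, d ∈ A →
      cycCost c (shortcut T A) ≤ α * TSP c V₁ +
        ∑ v ∈ (V₂.erase d).filter (· ∈ A), (c d v + c v d) := by
    intro A hdA
    have hfilter : shortcut T A =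
        d :: (t₁.filter (fun v => v ∈ A) ++ t₂.filter (fun v => v ∈ A)) := by
      rw [shortcut, hTeq]
      simp only [List.filter_cons, List.filter_append]
      simp [hdA]
    have hpart1 : pcost c d (t₁.filter (fun v => v ∈ A)) d ≤ α * TSP c V₁ := by
      have e1 : (d :: t₁.filter (fun v => v ∈ A)) = (d :: t₁).filter (fun v => v ∈ A) := by
        simp only [List.filter_cons]
        simp [hdA]
      calc pcost c d (t₁.filter (fun v => v ∈ A)) d
          = cycCost c (d :: t₁.filter (fun v => v ∈ A)) := (cycCost_cons d _).symm
        _ = cycCost c ((d :: t₁).filter (fun v => v ∈ A)) := by rw [e1]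
        _ ≤ cycCost c (d :: t₁) := cycCost_filter hc0 htri _ _
        _ = cycCost c T₁ := hcost₁
        _ ≤ α * TSP c V₁ := hT₁apx
    have hnd₂' : (t₂.filter (fun v => v ∈ A)).Nodup := ((List.nodup_cons.1 hnd₂).2).filter _
    have hpart2 : pcost c d (t₂.filter (fun v => v ∈ A)) d ≤
        ∑ v ∈ (V₂.erase d).filter (· ∈ A), (c d v + c v d) := by
      have h1 := pcost_star hcrefl htri d (t₂.filter (fun v => v ∈ A))
      have h2 : ∑ v ∈ (t₂.filter (fun v => v ∈ A)).toFinset, (c d v + c v d)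
          = ((t₂.filter (fun v => v ∈ A)).map (fun v => c d v + c v d)).sum :=
        List.sum_toFinset _ hnd₂'
      have h3 : (t₂.filter (fun v => v ∈ A)).toFinset = (V₂.erase d).filter (· ∈ A) := by
        ext x
        simp only [List.mem_toFinset, List.mem_filter, Finset.mem_filter, decide_eq_true_eq]
        rw [← List.mem_toFinset, htf₂]
      rw [h3] at h2
      rw [h2]
      exact h1
    calc cycCost c (shortcut T A)
        = pcost c d (t₁.filter (fun v => v ∈ A) ++ t₂.filter (fun v => v ∈ A)) d := by
          rw [hfilter, cycCost_cons]
      _ ≤ pcost c d (t₁.filter (fun v => v ∈ A)) d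
            + pcost c d (t₂.filter (fun v => v ∈ A)) d := pcost_append hcrefl htri d _ _
      _ ≤ α * TSP c V₁ + ∑ v ∈ (V₂.erase d).filter (· ∈ A), (c d v + c v d) :=
          add_le_add hpart1 hpart2
  -- Take expectations
  have hA1 : apExpect p (fun A => cycCost c (shortcut T A)) ≤
      apExpect p (fun A => α * TSP c V₁ +
        ∑ v ∈ (V₂.erase d).filter (· ∈ A), (c d v + c v d)) :=
    apExpect_mono_d hp0 hp1 hd hpoint
  have efun : (fun A : Finset V => α * TSP c V₁ +
        ∑ v ∈ (V₂.erase d).filter (· ∈ A), (c d v + c v d))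
      = (fun A : Finset V => α * TSP c V₁ +
          ∑ v ∈ V₂.erase d, (if v ∈ A then (c d v + c v d) else 0)) := by
    funext A
    rw [Finset.sum_filter]
  have hA2 : apExpect p (fun A => α * TSP c V₁ +
      ∑ v ∈ (V₂.erase d).filter (· ∈ A), (c d v + c v d))
      = α * TSP c V₁ + ∑ v ∈ V₂.erase d, p v * (c d v + c v d) := by
    rw [efun]
    have := apExpect_add p (fun _ => α * TSP c V₁)
      (fun A => ∑ v ∈ V₂.erase d, (if v ∈ A then (c d v + c v d) else 0))
    rw [this, apExpect_const, apExpect_sum]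
    congr 1
    exact Finset.sum_congr rfl fun v _ => apExpect_indicator p v _
  -- Step B : bound on TSP V₁
  have hstepB : TSP c V₁ ≤ 2 * s * E := by
    set k := ⌈s⌉₊ with hk'
    have hk1 : 1 ≤ k := by
      have : 0 < k := Nat.ceil_pos.2 hs0
      omega
    have hdW : d ∉ V₁.erase d := Finset.notMem_erase d V₁
    have h1 := TSP_le_k_bexp (d := d) hc0 hcrefl htri k hk1 (V₁.erase d) hdW
    rw [Finset.insert_erase hdV₁] at h1
    have hks : s ≤ (k:ℝ) := Nat.le_ceil s
    have hmono : bexp (V₁.erase d) (fun _ => 1/(k:ℝ)) (fun B => TSP c (insert d B)) ≤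
        bexp (V₁.erase d) p (fun B => TSP c (insert d B)) := by
      refine bexp_mono_prob (fun v _ => by positivity) ?_ (fun v _ => hp1 v) ?_
      · intro v hv
        have hv1 : v ∈ V₁ := Finset.mem_of_mem_erase hv
        rw [hV₁, Finset.mem_filter] at hv1
        exact (one_div_le_one_div_of_le hs0 hks).trans hv1.2
      · intro B v
        exact TSP_mono hc0 htri (Finset.insert_subset_insert d (Finset.subset_insert v B))
    have hbr := bexp_tsp_le_apExpect hc0 htri hp0 hp1 hd (V₁.erase d)
    have hk2 : (k:ℝ) ≤ 2*s := by
      have := Nat.ceil_lt_add_one (le_of_lt hs0)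
      linarith
    have hk0 : (0:ℝ) ≤ (k:ℝ) := Nat.cast_nonneg k
    calc TSP c V₁ ≤ k * bexp (V₁.erase d) (fun _ => 1/(k:ℝ)) (fun B => TSP c (insert d B)) := h1
      _ ≤ k * E := mul_le_mul_of_nonneg_left (hmono.trans hbr) hk0
      _ ≤ 2 * s * E := mul_le_mul_of_nonneg_right hk2 hE0
  -- Step C : bound on the low-probability part
  have hV₂small : ∀ v ∈ V₂.erase d, p v < 1/s := by
    intro v hv
    have hvd := Finset.ne_of_mem_erase hv
    have hv2 : v ∈ V₂ := Finset.mem_of_mem_erase hv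
    rw [hV₂, Finset.mem_union, Finset.mem_singleton] at hv2
    rcases hv2 with h | h
    · exact (Finset.mem_filter.1 h).2
    · exact absurd h hvd
  have hMs : ∑ v ∈ V₂.erase d, p v ≤ s := by
    have h1 : ∑ v ∈ V₂.erase d, p v ≤ (V₂.erase d).card • (1/s) :=
      Finset.sum_le_card_nsmul _ _ _ (fun v hv => (hV₂small v hv).le)
    have h2 : ((V₂.erase d).card : ℝ) ≤ (n : ℝ) := by
      exact_mod_cast Finset.card_le_univ _
    have h4 : (n:ℝ) * (1/s) = s := by
      have hss : s * s = (n:ℝ) := Real.mul_self_sqrt (by positivity)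
      rw [mul_one_div, div_eq_iff (ne_of_gt hs0)]
      exact hss.symm
    rw [nsmul_eq_mul] at h1
    have h3 : ((V₂.erase d).card : ℝ) * (1/s) ≤ (n:ℝ) * (1/s) :=
      mul_le_mul_of_nonneg_right h2 (by positivity)
    linarith
  have hstepC : ∑ v ∈ V₂.erase d, p v * (c d v + c v d) ≤ (8*s+2) * E := by
    have h1 := sum_pq_le hc0 htri hp0 hp1 hd (V₂.erase d)
      (fun v hv => Finset.ne_of_mem_erase hv)
    have hM0 : 0 ≤ ∑ v ∈ V₂.erase d, p v := Finset.sum_nonneg fun u _ => hp0 u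
    nlinarith
  -- Final assembly
  have hT0 : 0 ≤ TSP c V₁ := TSP_nonneg hc0 V₁
  have hα0 : (0:ℝ) ≤ α := by linarith
  have hfin1 : α * TSP c V₁ ≤ α * (2 * s * E) := mul_le_mul_of_nonneg_left hstepB hα0
  have hfin2 : 0 ≤ s * E := mul_nonneg (le_of_lt hs0) hE0
  calc apExpect p (fun A => cycCost c (shortcut T A))
      ≤ α * TSP c V₁ + ∑ v ∈ V₂.erase d, p v * (c d v + c v d) := by rw [← hA2]; exact hA1
    _ ≤ α * (2 * s * E) + (8*s+2) * E := add_le_add hfin1 hstepC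
    _ ≤ (2 * α + 12) * s * E := by nlinarith
end
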